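/- For α > 2, the function s ↦ f(s,s) = (∫₀^∞ e^{−2s x^{2/α}}/(1+x) dx) / (s·∫₀^∞ x^{2/α} e^{−2s x^{2/α}}/(1+x) dx) is monotonically decreasing on (0,∞). -/

import Mathlib

open Real MeasureTheory Set

private lemma exp_rpow_integrable {q p : ℝ} (hq : 0 < q) (hp : 0 ≤ p) :
    IntegrableOn (fun u : ℝ => u ^ p * Real.exp (-(2 * u ^ q))) (Ioi 0) := by
  have h0 : ∫ u in Ioi (0:ℝ), u ^ p * Real.exp (-(2 * u ^ q)) =
      2 ^ (-(p + 1) / q) * (1 / q) * Real.Gamma ((p + 1) / q) := by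
    simpa [neg_mul] using
      integral_rpow_mul_exp_neg_mul_rpow hq (by linarith : (-1:ℝ) < p) two_pos
  have hpos : 0 < 2 ^ (-(p + 1) / q) * (1 / q) * Real.Gamma ((p + 1) / q) := by
    have := Real.Gamma_pos_of_pos (show 0 < (p + 1) / q by positivity)
    positivity
  by_contra h
  rw [integral_undef h] at h0
  linarith

private lemma integrable_main {q p c : ℝ} (hq : 0 < q) (hp : 0 ≤ p) (hc : 0 < c) :
    IntegrableOn (fun u : ℝ => u ^ p * Real.exp (-(2 * u ^ q)) / (c + u)) (Ioi 0) := by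
  have hbase := (exp_rpow_integrable hq hp).const_mul c⁻¹
  refine Integrable.mono' hbase ?_ ?_
  · refine (ContinuousOn.aestronglyMeasurable ?_ measurableSet_Ioi)
    have h1 : ContinuousOn (fun u : ℝ => u ^ q) (Ioi 0) :=
      continuousOn_id.rpow_const (fun x hx => Or.inl (ne_of_gt hx))
    have h2 : ContinuousOn (fun u : ℝ => u ^ p) (Ioi 0) :=
      continuousOn_id.rpow_const (fun x hx => Or.inl (ne_of_gt hx))
    refine ContinuousOn.div (h2.mul ?_) (continuousOn_const.add continuousOn_id) ?_
    · exact Real.continuous_exp.comp_continuousOn ((continuousOn_const.mul h1).neg)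
    · intro x hx
      have : (0:ℝ) < x := hx
      positivity
  · filter_upwards [ae_restrict_mem measurableSet_Ioi] with u hu
    have hu' : (0:ℝ) < u := hu
    rw [Real.norm_eq_abs, abs_of_nonneg (by positivity)]
    calc u ^ p * Real.exp (-(2 * u ^ q)) / (c + u)
        ≤ u ^ p * Real.exp (-(2 * u ^ q)) / c := by gcongr; linarith
      _ = c⁻¹ * (u ^ p * Real.exp (-(2 * u ^ q))) := by ring

private lemma integral_main_pos {q p c : ℝ} (hq : 0 < q) (hp : 0 ≤ p) (hc : 0 < c) :
    0 < ∫ u in Ioi (0:ℝ), u ^ p * Real.exp (-(2 * u ^ q)) / (c + u) := by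
  rw [setIntegral_pos_iff_support_of_nonneg_ae ?_ (integrable_main hq hp hc)]
  · refine lt_of_lt_of_le ?_ (measure_mono (show Ioi (0:ℝ) ⊆ _ ∩ Ioi 0 from ?_))
    · rw [Real.volume_Ioi]; exact ENNReal.zero_lt_top
    · intro x hx
      have hx' : (0:ℝ) < x := hx
      exact ⟨ne_of_gt (by positivity), hx⟩
  · filter_upwards [ae_restrict_mem measurableSet_Ioi] with u hu
    have hu' : (0:ℝ) < u := hu
    positivity

private lemma key_ineq {q c₁ c₂ : ℝ} (hq : 0 < q) (hc₁ : 0 < c₁) (hcc : c₁ ≤ c₂) :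
    (∫ u in Ioi (0:ℝ), Real.exp (-(2 * u ^ q)) / (c₂ + u)) *
      (∫ u in Ioi (0:ℝ), u ^ q * Real.exp (-(2 * u ^ q)) / (c₁ + u)) ≤
    (∫ u in Ioi (0:ℝ), Real.exp (-(2 * u ^ q)) / (c₁ + u)) *
      (∫ u in Ioi (0:ℝ), u ^ q * Real.exp (-(2 * u ^ q)) / (c₂ + u)) := by
  have hc₂ : 0 < c₂ := lt_of_lt_of_le hc₁ hcc
  set μ := volume.restrict (Ioi (0:ℝ)) with hμ
  set f₁ : ℝ → ℝ := fun u => Real.exp (-(2 * u ^ q)) / (c₁ + u) with hf₁def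
  set f₂ : ℝ → ℝ := fun u => Real.exp (-(2 * u ^ q)) / (c₂ + u) with hf₂def
  set g₁ : ℝ → ℝ := fun u => u ^ q * Real.exp (-(2 * u ^ q)) / (c₁ + u) with hg₁def
  set g₂ : ℝ → ℝ := fun u => u ^ q * Real.exp (-(2 * u ^ q)) / (c₂ + u) with hg₂def
  have hf₁ : Integrable f₁ μ := by
    have := integrable_main hq le_rfl hc₁
    simp only [Real.rpow_zero, one_mul] at this
    exact this
  have hf₂ : Integrable f₂ μ := by
    have := integrable_main hq le_rfl hc₂
    simp only [Real.rpow_zero, one_mul] at this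
    exact this
  have hg₁ : Integrable g₁ μ := integrable_main hq hq.le hc₁
  have hg₂ : Integrable g₂ μ := integrable_main hq hq.le hc₂
  have hint1 : Integrable (fun z : ℝ × ℝ => f₁ z.1 * g₂ z.2) (μ.prod μ) := hf₁.mul_prod hg₂
  have hint2 : Integrable (fun z : ℝ × ℝ => g₂ z.1 * f₁ z.2) (μ.prod μ) := hg₂.mul_prod hf₁
  have hint3 : Integrable (fun z : ℝ × ℝ => f₂ z.1 * g₁ z.2) (μ.prod μ) := hf₂.mul_prod hg₁
  have hint4 : Integrable (fun z : ℝ × ℝ => g₁ z.1 * f₂ z.2) (μ.prod μ) := hg₁.mul_prod hf₂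
  have hT : 0 ≤ ∫ z : ℝ × ℝ,
      (f₁ z.1 * g₂ z.2 + g₂ z.1 * f₁ z.2 - (f₂ z.1 * g₁ z.2 + g₁ z.1 * f₂ z.2)) ∂(μ.prod μ) := by
    apply integral_nonneg_of_ae
    rw [hμ, Measure.prod_restrict]
    filter_upwards [ae_restrict_mem (measurableSet_Ioi.prod measurableSet_Ioi)] with z hz
    obtain ⟨hu, hv⟩ := hz
    obtain ⟨u, v⟩ := z
    have hu' : (0:ℝ) < u := hu
    have hv' : (0:ℝ) < v := hv
    have hsign : 0 ≤ (v ^ q - u ^ q) * (v - u) := by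
      rcases le_total u v with h | h
      · exact mul_nonneg (sub_nonneg.2 (Real.rpow_le_rpow hu'.le h hq.le))
          (sub_nonneg.2 h)
      · have h1 : v ^ q - u ^ q ≤ 0 := sub_nonpos.2 (Real.rpow_le_rpow hv'.le h hq.le)
        have h2 : v - u ≤ 0 := sub_nonpos.2 h
        nlinarith
    have hkey : f₁ u * g₂ v + g₂ u * f₁ v - (f₂ u * g₁ v + g₁ u * f₂ v)
        = (Real.exp (-(2 * u ^ q)) * Real.exp (-(2 * v ^ q)) *
            ((c₂ - c₁) * ((v ^ q - u ^ q) * (v - u)))) /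
          ((c₁ + u) * (c₂ + u) * ((c₁ + v) * (c₂ + v))) := by
      simp only [hf₁def, hf₂def, hg₁def, hg₂def]
      have h1 : c₁ + u ≠ 0 := by positivity
      have h2 : c₂ + u ≠ 0 := by positivity
      have h3 : c₁ + v ≠ 0 := by positivity
      have h4 : c₂ + v ≠ 0 := by positivity
      field_simp
      ring
    simp only [Pi.zero_apply]
    rw [hkey]
    apply div_nonneg
    · have he1 := (Real.exp_pos (-(2 * u ^ q))).le
      have he2 := (Real.exp_pos (-(2 * v ^ q))).le
      have : (0:ℝ) ≤ c₂ - c₁ := by linarith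
      positivity
    · positivity
  have hadd1 : Integrable (fun z : ℝ × ℝ => f₁ z.1 * g₂ z.2 + g₂ z.1 * f₁ z.2) (μ.prod μ) :=
    hint1.add hint2
  have hadd2 : Integrable (fun z : ℝ × ℝ => f₂ z.1 * g₁ z.2 + g₁ z.1 * f₂ z.2) (μ.prod μ) :=
    hint3.add hint4
  rw [integral_sub hadd1 hadd2, integral_add hint1 hint2,
    integral_add hint3 hint4, integral_prod_mul, integral_prod_mul, integral_prod_mul,
    integral_prod_mul] at hT
  simp only [hf₁def, hf₂def, hg₁def, hg₂def] at hT
  linarith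

private lemma cpow_eq {α s : ℝ} (hα : 2 < α) (hs : 0 < s) :
    (s ^ (α / 2)) ^ (2 / α) = s := by
  rw [← Real.rpow_mul hs.le]
  have hα0 : α ≠ 0 := by linarith
  rw [show α / 2 * (2 / α) = 1 by field_simp, Real.rpow_one]

private lemma cov1 {α s : ℝ} (hα : 2 < α) (hs : 0 < s) :
    (∫ x in Ioi (0:ℝ), Real.exp (-(2 * s * x ^ (2 / α))) / (1 + x)) =
      ∫ u in Ioi (0:ℝ), Real.exp (-(2 * u ^ (2 / α))) / (s ^ (α / 2) + u) := by
  set c : ℝ := s ^ (α / 2) with hcdef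
  have hc : 0 < c := Real.rpow_pos_of_pos hs _
  have step1 : (∫ x in Ioi (0:ℝ), Real.exp (-(2 * s * x ^ (2 / α))) / (1 + x)) =
      ∫ x in Ioi (0:ℝ),
        (fun y => c * (Real.exp (-(2 * y ^ (2 / α))) / (c + y))) (c * x) := by
    refine setIntegral_congr_fun measurableSet_Ioi (fun x hx => ?_)
    have hx' : (0:ℝ) < x := hx
    simp only
    rw [Real.mul_rpow hc.le hx'.le, cpow_eq hα hs]
    have h1x : (0:ℝ) < 1 + x := by linarith
    field_simp
  rw [step1,
    integral_comp_mul_left_Ioi (fun y => c * (Real.exp (-(2 * y ^ (2 / α))) / (c + y))) 0 hc,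
    mul_zero, smul_eq_mul, MeasureTheory.integral_const_mul, ← mul_assoc,
    inv_mul_cancel₀ hc.ne', one_mul]

private lemma cov2 {α s : ℝ} (hα : 2 < α) (hs : 0 < s) :
    s * (∫ x in Ioi (0:ℝ), x ^ (2 / α) * Real.exp (-(2 * s * x ^ (2 / α))) / (1 + x)) =
      ∫ u in Ioi (0:ℝ), u ^ (2 / α) * Real.exp (-(2 * u ^ (2 / α))) / (s ^ (α / 2) + u) := by
  set c : ℝ := s ^ (α / 2) with hcdef
  have hc : 0 < c := Real.rpow_pos_of_pos hs _
  have step1 : (∫ x in Ioi (0:ℝ), x ^ (2 / α) * Real.exp (-(2 * s * x ^ (2 / α))) / (1 + x)) =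
      ∫ x in Ioi (0:ℝ),
        (fun y => (c / s) * (y ^ (2 / α) * Real.exp (-(2 * y ^ (2 / α))) / (c + y))) (c * x) := by
    refine setIntegral_congr_fun measurableSet_Ioi (fun x hx => ?_)
    have hx' : (0:ℝ) < x := hx
    simp only
    rw [Real.mul_rpow hc.le hx'.le, cpow_eq hα hs]
    have h1x : (0:ℝ) < 1 + x := by linarith
    field_simp
  rw [step1,
    integral_comp_mul_left_Ioi
      (fun y => (c / s) * (y ^ (2 / α) * Real.exp (-(2 * y ^ (2 / α))) / (c + y))) 0 hc,
    mul_zero, smul_eq_mul, MeasureTheory.integral_const_mul]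
  field_simp

theorem f_diag_antitone (α : ℝ) (hα : 2 < α) :
    AntitoneOn (fun s : ℝ =>
      (∫ x in Set.Ioi (0 : ℝ), Real.exp (-(2 * s * x ^ (2 / α))) / (1 + x)) /
      (s * ∫ x in Set.Ioi (0 : ℝ),
        x ^ (2 / α) * Real.exp (-(2 * s * x ^ (2 / α))) / (1 + x)))
      (Set.Ioi 0) := by
  intro s₁ hs₁ s₂ hs₂ h12
  have hs₁' : (0:ℝ) < s₁ := hs₁
  have hs₂' : (0:ℝ) < s₂ := hs₂
  have hq : 0 < 2 / α := by positivity
  have hc₁ : 0 < s₁ ^ (α / 2) := Real.rpow_pos_of_pos hs₁' _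
  have hc₂ : 0 < s₂ ^ (α / 2) := Real.rpow_pos_of_pos hs₂' _
  have hcc : s₁ ^ (α / 2) ≤ s₂ ^ (α / 2) :=
    Real.rpow_le_rpow hs₁'.le h12 (by positivity)
  have hB₁ : 0 < ∫ u in Ioi (0:ℝ),
      u ^ (2 / α) * Real.exp (-(2 * u ^ (2 / α))) / (s₁ ^ (α / 2) + u) :=
    integral_main_pos hq hq.le hc₁
  have hB₂ : 0 < ∫ u in Ioi (0:ℝ),
      u ^ (2 / α) * Real.exp (-(2 * u ^ (2 / α))) / (s₂ ^ (α / 2) + u) :=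
    integral_main_pos hq hq.le hc₂
  simp only
  rw [cov1 hα hs₁', cov1 hα hs₂', cov2 hα hs₁', cov2 hα hs₂',
    div_le_div_iff₀ hB₂ hB₁]
  exact key_ineq hq hc₁ hcc
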